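/- Sandwich corollary: if J satisfies J ≤ TJ ≤ J* pointwise, then for every batch-size 1 ≤ m ≤ n and every k ≥ 1, (T^k J)(i) ≤ (B_m^k J)(i) ≤ (F^k J)(i) ≤ J*(i) for all i, where T is the Bellman operator (m = n) and F is the Gauss-Seidel operator (m = 1). -/

import Mathlib

open Finset Filter

/-- The randomized mini-batch Bellman operator `B_m`. States are `Fin n`
(0-indexed version of `{1,…,n}`); the set `M_m(i)` of already-updated states
consists of the `j` with `(j : ℕ) < m * (i / m)` (the 0-indexed version of
`{1,…,m⌊(i-1)/m⌋}`). The operator is defined recursively in `i`. -/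
noncomputable def Bm (n m : ℕ) (U : Fin n → Finset ℕ) (hU : ∀ i, (U i).Nonempty)
    (p : Fin n → ℕ → Fin n → ℝ) (g : Fin n → ℕ → ℝ) (α : ℝ)
    (J : Fin n → ℝ) (i : Fin n) : ℝ :=
  (U i).inf' (hU i) fun u =>
    g i u
      + α * ∑ j : Fin n, (if (j : ℕ) < m * ((i : ℕ) / m) then 0 else p i u j * J j)
      + α * ∑ j : {j : Fin n // (j : ℕ) < m * ((i : ℕ) / m)},
          p i u j.1 * Bm n m U hU p g α J j.1
termination_by (i : ℕ)
decreasing_by exact lt_of_lt_of_le j.2 (Nat.mul_div_le _ _)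

/-- The standard Bellman operator `T`. -/
noncomputable def Bell (n : ℕ) (U : Fin n → Finset ℕ) (hU : ∀ i, (U i).Nonempty)
    (p : Fin n → ℕ → Fin n → ℝ) (g : Fin n → ℕ → ℝ) (α : ℝ)
    (J : Fin n → ℝ) (i : Fin n) : ℝ :=
  (U i).inf' (hU i) fun u => g i u + α * ∑ j : Fin n, p i u j * J j

/-- The Gauss-Seidel operator `F`. -/
noncomputable def GS (n : ℕ) (U : Fin n → Finset ℕ) (hU : ∀ i, (U i).Nonempty)
    (p : Fin n → ℕ → Fin n → ℝ) (g : Fin n → ℕ → ℝ) (α : ℝ)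
    (J : Fin n → ℝ) (i : Fin n) : ℝ :=
  (U i).inf' (hU i) fun u =>
    g i u
      + α * ∑ j : {j : Fin n // (j : ℕ) < (i : ℕ)}, p i u j.1 * GS n U hU p g α J j.1
      + α * ∑ j : Fin n, (if (j : ℕ) < (i : ℕ) then 0 else p i u j * J j)
termination_by (i : ℕ)
decreasing_by exact j.2

section Aux

variable {n m : ℕ} {U : Fin n → Finset ℕ} {hU : ∀ i, (U i).Nonempty}
  {p : Fin n → ℕ → Fin n → ℝ} {g : Fin n → ℕ → ℝ} {α : ℝ}

private lemma inf'_mono {s : Finset ℕ} (hs : s.Nonempty) {f f' : ℕ → ℝ}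
    (h : ∀ u ∈ s, f u ≤ f' u) : s.inf' hs f ≤ s.inf' hs f' :=
  Finset.le_inf' _ _ fun u hu => (Finset.inf'_le _ hu).trans (h u hu)

private lemma combine (c : ℕ) (a b : Fin n → ℝ) :
    (∑ j : Fin n, if (j : ℕ) < c then 0 else a j)
      + ∑ j : {j : Fin n // (j : ℕ) < c}, b j.1
      = ∑ j : Fin n, if (j : ℕ) < c then b j else a j := by
  have hs : (∑ j : {j : Fin n // (j : ℕ) < c}, b j.1)
      = ∑ j : Fin n, if (j : ℕ) < c then b j else 0 := by
    rw [← Finset.sum_filter]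
    exact (Finset.sum_subtype _ (by simp) b).symm
  rw [hs, ← Finset.sum_add_distrib]
  exact Finset.sum_congr rfl fun j _ => by split <;> simp

private lemma Bm_eq (J : Fin n → ℝ) (i : Fin n) :
    Bm n m U hU p g α J i = (U i).inf' (hU i) fun u =>
      g i u + α * ∑ j : Fin n,
        (if (j : ℕ) < m * ((i : ℕ) / m) then p i u j * Bm n m U hU p g α J j
         else p i u j * J j) := by
  rw [Bm]
  congr 1
  funext u
  rw [← combine (m * ((i : ℕ) / m)) (fun j => p i u j * J j)
    (fun j => p i u j * Bm n m U hU p g α J j)]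
  ring

private lemma GS_eq (J : Fin n → ℝ) (i : Fin n) :
    GS n U hU p g α J i = (U i).inf' (hU i) fun u =>
      g i u + α * ∑ j : Fin n,
        (if (j : ℕ) < (i : ℕ) then p i u j * GS n U hU p g α J j
         else p i u j * J j) := by
  rw [GS]
  congr 1
  funext u
  rw [← combine ((i : ℕ)) (fun j => p i u j * J j)
    (fun j => p i u j * GS n U hU p g α J j)]
  ring

private lemma Bell_mono (hp : ∀ i u j, 0 ≤ p i u j) (hα : 0 ≤ α) {J J' : Fin n → ℝ}
    (h : ∀ j, J j ≤ J' j) (i : Fin n) :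
    Bell n U hU p g α J i ≤ Bell n U hU p g α J' i := by
  refine inf'_mono _ fun u _ => ?_
  refine add_le_add_right (mul_le_mul_of_nonneg_left (Finset.sum_le_sum fun j _ => ?_) hα) _
  exact mul_le_mul_of_nonneg_left (h j) (hp _ _ _)

private lemma Bm_mono (hp : ∀ i u j, 0 ≤ p i u j) (hα : 0 ≤ α) {J J' : Fin n → ℝ}
    (h : ∀ j, J j ≤ J' j) (i : Fin n) :
    Bm n m U hU p g α J i ≤ Bm n m U hU p g α J' i := by
  suffices H : ∀ N, ∀ i : Fin n, (i : ℕ) < N →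
      Bm n m U hU p g α J i ≤ Bm n m U hU p g α J' i from H _ i (Nat.lt_succ_self _)
  intro N
  induction N with
  | zero => exact fun i hi => absurd hi (Nat.not_lt_zero _)
  | succ N IH =>
    intro i hi
    rw [Bm_eq, Bm_eq]
    refine inf'_mono _ fun u _ => ?_
    refine add_le_add_right (mul_le_mul_of_nonneg_left (Finset.sum_le_sum fun j _ => ?_) hα) _
    by_cases hj : (j : ℕ) < m * ((i : ℕ) / m)
    · simp only [hj, if_true]
      refine mul_le_mul_of_nonneg_left (IH j ?_) (hp _ _ _)
      have := Nat.mul_div_le (i : ℕ) m; omega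
    · simp only [hj, if_false]
      exact mul_le_mul_of_nonneg_left (h j) (hp _ _ _)

private lemma GS_mono (hp : ∀ i u j, 0 ≤ p i u j) (hα : 0 ≤ α) {J J' : Fin n → ℝ}
    (h : ∀ j, J j ≤ J' j) (i : Fin n) :
    GS n U hU p g α J i ≤ GS n U hU p g α J' i := by
  suffices H : ∀ N, ∀ i : Fin n, (i : ℕ) < N →
      GS n U hU p g α J i ≤ GS n U hU p g α J' i from H _ i (Nat.lt_succ_self _)
  intro N
  induction N with
  | zero => exact fun i hi => absurd hi (Nat.not_lt_zero _)
  | succ N IH =>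
    intro i hi
    rw [GS_eq, GS_eq]
    refine inf'_mono _ fun u _ => ?_
    refine add_le_add_right (mul_le_mul_of_nonneg_left (Finset.sum_le_sum fun j _ => ?_) hα) _
    by_cases hj : (j : ℕ) < (i : ℕ)
    · simp only [hj, if_true]
      exact mul_le_mul_of_nonneg_left (IH j (by omega)) (hp _ _ _)
    · simp only [hj, if_false]
      exact mul_le_mul_of_nonneg_left (h j) (hp _ _ _)

private lemma Bell_le_Bm (hp : ∀ i u j, 0 ≤ p i u j) (hα : 0 ≤ α) {J : Fin n → ℝ}
    (hJ : ∀ j, J j ≤ Bell n U hU p g α J j) (i : Fin n) :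
    Bell n U hU p g α J i ≤ Bm n m U hU p g α J i := by
  suffices H : ∀ N, ∀ i : Fin n, (i : ℕ) < N →
      Bell n U hU p g α J i ≤ Bm n m U hU p g α J i from H _ i (Nat.lt_succ_self _)
  intro N
  induction N with
  | zero => exact fun i hi => absurd hi (Nat.not_lt_zero _)
  | succ N IH =>
    intro i hi
    rw [Bm_eq]
    unfold Bell
    refine inf'_mono _ fun u _ => ?_
    refine add_le_add_right (mul_le_mul_of_nonneg_left (Finset.sum_le_sum fun j _ => ?_) hα) _
    by_cases hj : (j : ℕ) < m * ((i : ℕ) / m)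
    · simp only [hj, if_true]
      refine mul_le_mul_of_nonneg_left ((hJ j).trans (IH j ?_)) (hp _ _ _)
      have := Nat.mul_div_le (i : ℕ) m; omega
    · simp only [hj, if_false]
      exact le_refl _

private lemma Bm_le_GS (hp : ∀ i u j, 0 ≤ p i u j) (hα : 0 ≤ α) {J : Fin n → ℝ}
    (hJ : ∀ j, J j ≤ Bell n U hU p g α J j) (i : Fin n) :
    Bm n m U hU p g α J i ≤ GS n U hU p g α J i := by
  suffices H : ∀ N, ∀ i : Fin n, (i : ℕ) < N →
      Bm n m U hU p g α J i ≤ GS n U hU p g α J i from H _ i (Nat.lt_succ_self _)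
  intro N
  induction N with
  | zero => exact fun i hi => absurd hi (Nat.not_lt_zero _)
  | succ N IH =>
    intro i hi
    rw [Bm_eq, GS_eq]
    refine inf'_mono _ fun u _ => ?_
    refine add_le_add_right (mul_le_mul_of_nonneg_left (Finset.sum_le_sum fun j _ => ?_) hα) _
    have hci : m * ((i : ℕ) / m) ≤ (i : ℕ) := Nat.mul_div_le _ _
    by_cases hj2 : (j : ℕ) < (i : ℕ)
    · have hjN : (j : ℕ) < N := by omega
      simp only [hj2, if_true]
      by_cases hj1 : (j : ℕ) < m * ((i : ℕ) / m)
      · simp only [hj1, if_true]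
        exact mul_le_mul_of_nonneg_left (IH j hjN) (hp _ _ _)
      · simp only [hj1, if_false]
        refine mul_le_mul_of_nonneg_left ?_ (hp _ _ _)
        exact ((hJ j).trans (Bell_le_Bm hp hα hJ j)).trans (IH j hjN)
    · have hj1 : ¬ (j : ℕ) < m * ((i : ℕ) / m) := by omega
      simp only [hj1, hj2, if_false]
      exact le_refl _

private lemma GS_le_star (hp : ∀ i u j, 0 ≤ p i u j) (hα : 0 ≤ α) {J Jstar : Fin n → ℝ}
    (hfix : ∀ i, Bell n U hU p g α Jstar i = Jstar i)
    (hJs : ∀ j, J j ≤ Jstar j) (i : Fin n) :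
    GS n U hU p g α J i ≤ Jstar i := by
  suffices H : ∀ N, ∀ i : Fin n, (i : ℕ) < N →
      GS n U hU p g α J i ≤ Jstar i from H _ i (Nat.lt_succ_self _)
  intro N
  induction N with
  | zero => exact fun i hi => absurd hi (Nat.not_lt_zero _)
  | succ N IH =>
    intro i hi
    rw [← hfix i, GS_eq]
    unfold Bell
    refine inf'_mono _ fun u _ => ?_
    refine add_le_add_right (mul_le_mul_of_nonneg_left (Finset.sum_le_sum fun j _ => ?_) hα) _
    by_cases hj : (j : ℕ) < (i : ℕ)
    · simp only [hj, if_true]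
      exact mul_le_mul_of_nonneg_left (IH j (by omega)) (hp _ _ _)
    · simp only [hj, if_false]
      exact mul_le_mul_of_nonneg_left (hJs j) (hp _ _ _)

private lemma Bm_subfix (hp : ∀ i u j, 0 ≤ p i u j) (hα : 0 ≤ α) {J : Fin n → ℝ}
    (hJ : ∀ j, J j ≤ Bell n U hU p g α J j) (i : Fin n) :
    Bm n m U hU p g α J i ≤ Bell n U hU p g α (Bm n m U hU p g α J) i := by
  have hJB : ∀ j, J j ≤ Bm n m U hU p g α J j :=
    fun j => (hJ j).trans (Bell_le_Bm hp hα hJ j)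
  rw [Bm_eq]
  unfold Bell
  refine inf'_mono _ fun u _ => ?_
  refine add_le_add_right (mul_le_mul_of_nonneg_left (Finset.sum_le_sum fun j _ => ?_) hα) _
  by_cases hj : (j : ℕ) < m * ((i : ℕ) / m)
  · simp only [hj, if_true]; exact le_refl _
  · simp only [hj, if_false]
    exact mul_le_mul_of_nonneg_left (hJB j) (hp _ _ _)

private lemma GS_subfix (hp : ∀ i u j, 0 ≤ p i u j) (hα : 0 ≤ α) {J : Fin n → ℝ}
    (hJ : ∀ j, J j ≤ Bell n U hU p g α J j) (i : Fin n) :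
    GS n U hU p g α J i ≤ Bell n U hU p g α (GS n U hU p g α J) i := by
  have hJG : ∀ j, J j ≤ GS n U hU p g α J j := fun j =>
    ((hJ j).trans (Bell_le_Bm (m := 1) hp hα hJ j)).trans (Bm_le_GS (m := 1) hp hα hJ j)
  rw [GS_eq]
  unfold Bell
  refine inf'_mono _ fun u _ => ?_
  refine add_le_add_right (mul_le_mul_of_nonneg_left (Finset.sum_le_sum fun j _ => ?_) hα) _
  by_cases hj : (j : ℕ) < (i : ℕ)
  · simp only [hj, if_true]; exact le_refl _
  · simp only [hj, if_false]
    exact mul_le_mul_of_nonneg_left (hJG j) (hp _ _ _)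

end Aux

/-- Sandwich corollary: `T^k J ≤ B_m^k J ≤ F^k J ≤ J*`. -/
theorem Bm_sandwich (n m : ℕ) (hm1 : 1 ≤ m) (hmn : m ≤ n)
    (U : Fin n → Finset ℕ) (hU : ∀ i, (U i).Nonempty)
    (p : Fin n → ℕ → Fin n → ℝ) (hp : ∀ i u j, 0 ≤ p i u j)
    (hpsum : ∀ i u, ∑ j : Fin n, p i u j = 1)
    (g : Fin n → ℕ → ℝ) (α : ℝ) (hα0 : 0 < α) (hα1 : α < 1)
    (Jstar : Fin n → ℝ) (hfix : ∀ i, Bell n U hU p g α Jstar i = Jstar i)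
    (J : Fin n → ℝ)
    (hJ1 : ∀ i, J i ≤ Bell n U hU p g α J i)
    (hJ2 : ∀ i, Bell n U hU p g α J i ≤ Jstar i)
    (k : ℕ) (hk : 1 ≤ k) :
    ∀ i, (Bell n U hU p g α)^[k] J i ≤ (Bm n m U hU p g α)^[k] J i ∧
      (Bm n m U hU p g α)^[k] J i ≤ (GS n U hU p g α)^[k] J i ∧
      (GS n U hU p g α)^[k] J i ≤ Jstar i := by
  have hα : (0 : ℝ) ≤ α := hα0.le
  set T := Bell n U hU p g α with hT
  set B := Bm n m U hU p g α with hB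
  set G := GS n U hU p g α with hG
  have main : ∀ k : ℕ,
      (∀ i, T^[k] J i ≤ B^[k] J i) ∧ (∀ i, B^[k] J i ≤ G^[k] J i) ∧
      (∀ i, G^[k] J i ≤ Jstar i) ∧
      (∀ i, T^[k] J i ≤ T (T^[k] J) i) ∧ (∀ i, B^[k] J i ≤ T (B^[k] J) i) ∧
      (∀ i, G^[k] J i ≤ T (G^[k] J) i) := by
    intro k
    induction k with
    | zero =>
      exact ⟨fun i => le_refl _, fun i => le_refl _, fun i => (hJ1 i).trans (hJ2 i),
        hJ1, hJ1, hJ1⟩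
    | succ k IH =>
      obtain ⟨h1, h2, h3, h4, h5, h6⟩ := IH
      simp only [Function.iterate_succ_apply']
      refine ⟨?_, ?_, ?_, ?_, ?_, ?_⟩
      · exact fun i => (Bell_mono hp hα h1 i).trans (Bell_le_Bm hp hα h5 i)
      · exact fun i => (Bm_mono hp hα h2 i).trans (Bm_le_GS hp hα h6 i)
      · exact fun i => GS_le_star hp hα hfix h3 i
      · exact fun i => Bell_mono hp hα h4 i
      · exact fun i => Bm_subfix hp hα h5 i
      · exact fun i => GS_subfix hp hα h6 i
  exact fun i => ⟨(main k).1 i, (main k).2.1 i, (main k).2.2.1 i⟩
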